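/- arXiv:1006.2940 — 3 statements merged into one kernel-verified Lean document; each statement's English description precedes it below -/
import Mathlib

section
/- Adding boundary constraints to isotonic regression yields the Winsorized solution: let y ∈ ℝⁿ and let f* be the (unique) isotonic regression of y, i.e. the minimizer of ∑ᵢ(yᵢ - fᵢ)² over monotone increasing f. Assume f* is a regressogram: there is a partition of {1,...,n} into consecutive blocks on which f* is constant and equals the block mean of y. Then for any A ≤ B, the Winsorized vector f*_{>A,<B} with coordinates max(A, min(B, f*ᵢ)) is the unique minimizer of ∑ᵢ(yᵢ - fᵢ)² over monotone increasing f satisfying A ≤ fᵢ ≤ B for all i. -/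
/-- Adding boundary constraints to isotonic regression yields the
Winsorized solution. Let `fs` be the isotonic regression of `y` (a monotone
minimizer of the residual sum of squares over monotone vectors), with the
regressogram property: on each level set of `fs`, the residuals of `y` sum to
zero. Then for any `A ≤ B`, the Winsorized vector `g i = max A (min B (fs i))`
is the unique minimizer of `∑ (yᵢ - fᵢ)²` over monotone `f` with
`A ≤ fᵢ ≤ B` for all `i`. -/
theorem winsorized_solves_boundary_constrained_isotonic (n : ℕ) (hn : 1 ≤ n)
    (y fs : Fin n → ℝ) (hmono : Monotone fs)
    (hmin : ∀ f : Fin n → ℝ, Monotone f →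
      ∑ i, (y i - fs i) ^ 2 ≤ ∑ i, (y i - f i) ^ 2)
    (hreg : ∀ i : Fin n,
      ∑ j ∈ Finset.univ.filter (fun j => fs j = fs i), (y j - fs j) = 0)
    (A B : ℝ) (hAB : A ≤ B) :
    let g : Fin n → ℝ := fun i => max A (min B (fs i))
    (Monotone g ∧ (∀ i, A ≤ g i ∧ g i ≤ B)) ∧
    (∀ f : Fin n → ℝ, Monotone f → (∀ i, A ≤ f i ∧ f i ≤ B) →
      ∑ i, (y i - g i) ^ 2 ≤ ∑ i, (y i - f i) ^ 2) ∧
    (∀ f : Fin n → ℝ, Monotone f → (∀ i, A ≤ f i ∧ f i ≤ B) →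
      (∀ f' : Fin n → ℝ, Monotone f' → (∀ i, A ≤ f' i ∧ f' i ≤ B) →
        ∑ i, (y i - f i) ^ 2 ≤ ∑ i, (y i - f' i) ^ 2) → f = g) := by
  classical
  intro g
  -- basic facts about g
  have hgmono : Monotone g := fun a b hab =>
    max_le_max le_rfl (min_le_min le_rfl (hmono hab))
  have hgbd : ∀ i, A ≤ g i ∧ g i ≤ B := fun i =>
    ⟨le_max_left _ _, max_le hAB (min_le_left _ _)⟩
  -- S1 : variational inequality from optimality of fs
  have S1 : ∀ f : Fin n → ℝ, Monotone f → ∑ i, (y i - fs i) * f i ≤ 0 := by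
    intro f hf
    by_contra hS
    push_neg at hS
    set S := ∑ i, (y i - fs i) * f i with hSdef
    have hQ : (0:ℝ) ≤ ∑ i, f i ^ 2 := Finset.sum_nonneg fun i _ => sq_nonneg _
    set Q := ∑ i, f i ^ 2 with hQdef
    rcases eq_or_lt_of_le hQ with hQ0 | hQpos
    · have : ∀ i ∈ Finset.univ, f i ^ 2 = 0 := by
        intro i _
        have := (Finset.sum_eq_zero_iff_of_nonneg (fun i _ => sq_nonneg (f i))).mp hQ0.symm
        exact this i (Finset.mem_univ i)
      have hf0 : ∀ i, f i = 0 := fun i => by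
        have := this i (Finset.mem_univ i); nlinarith [this]
      have : S = 0 := by
        simp [hSdef, hf0]
      linarith
    · set t := S / Q with htdef
      have ht : 0 < t := div_pos hS hQpos
      have hmono2 : Monotone (fun i => fs i + t * f i) := by
        intro a b hab
        have := hf hab
        have := hmono hab
        dsimp
        nlinarith
      have := hmin _ hmono2
      have expand : ∑ i, (y i - (fs i + t * f i)) ^ 2
          = ∑ i, (y i - fs i) ^ 2 - 2 * t * S + t ^ 2 * Q := by
        have h1 : ∀ i, (y i - (fs i + t * f i)) ^ 2
            = (y i - fs i) ^ 2 - 2 * t * ((y i - fs i) * f i) + t ^ 2 * f i ^ 2 := by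
          intro i; ring
        simp_rw [h1]
        rw [Finset.sum_add_distrib, Finset.sum_sub_distrib, ← Finset.mul_sum,
          ← Finset.mul_sum]
      rw [expand] at this
      have htQ : t * Q = S := by
        rw [htdef]; exact div_mul_cancel₀ S hQpos.ne'
      nlinarith
  -- S2 : residuals are orthogonal to any function of fs, in particular g
  have S2 : ∑ i, (y i - fs i) * g i = 0 := by
    have hmaps : ∀ x ∈ (Finset.univ : Finset (Fin n)), fs x ∈ Finset.univ.image fs :=
      fun x _ => Finset.mem_image_of_mem _ (Finset.mem_univ x)
    rw [← Finset.sum_fiberwise_of_maps_to hmaps (fun i => (y i - fs i) * g i)]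
    apply Finset.sum_eq_zero
    intro v hv
    obtain ⟨i0, -, hi0⟩ := Finset.mem_image.mp hv
    subst hi0
    have : ∀ j ∈ Finset.univ.filter (fun j => fs j = fs i0),
        (y j - fs j) * g j = (y j - fs j) * g i0 := by
      intro j hj
      have hj' : fs j = fs i0 := (Finset.mem_filter.mp hj).2
      simp only [g, hj']
    rw [Finset.sum_congr rfl this, ← Finset.sum_mul, hreg i0, zero_mul]
  -- S3 : pointwise clipping inequality
  have S3 : ∀ f : Fin n → ℝ, (∀ i, A ≤ f i ∧ f i ≤ B) →
      ∑ i, (fs i - g i) * (f i - g i) ≤ 0 := by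
    intro f hf
    apply Finset.sum_nonpos
    intro i _
    obtain ⟨h1, h2⟩ := hf i
    rcases le_total (fs i) A with hA | hA
    · have hg : g i = A := by
        have : min B (fs i) = fs i := min_eq_right (hA.trans hAB)
        simp [g, this, max_eq_left hA]
      rw [hg]; nlinarith
    · rcases le_total B (fs i) with hB | hB
      · have hg : g i = B := by
          have : min B (fs i) = B := min_eq_left hB
          simp [g, this, max_eq_right hAB]
        rw [hg]; nlinarith
      · have hg : g i = fs i := by
          have : min B (fs i) = fs i := min_eq_right hB
          simp [g, this, max_eq_right hA]
        rw [hg]; ring_nf; simp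
  -- cross term nonpositive
  have cross : ∀ f : Fin n → ℝ, Monotone f → (∀ i, A ≤ f i ∧ f i ≤ B) →
      ∑ i, (y i - g i) * (f i - g i) ≤ 0 := by
    intro f hf hfb
    have h1 : ∑ i, (y i - g i) * (f i - g i)
        = ∑ i, (y i - fs i) * f i - ∑ i, (y i - fs i) * g i
          + ∑ i, (fs i - g i) * (f i - g i) := by
      rw [← Finset.sum_sub_distrib, ← Finset.sum_add_distrib]
      apply Finset.sum_congr rfl
      intro i _; ring
    rw [h1, S2, sub_zero]
    have := S1 f hf
    have := S3 f hfb
    linarith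
  -- exact quadratic expansion
  have expand : ∀ f : Fin n → ℝ, ∑ i, (y i - f i) ^ 2
      = ∑ i, (y i - g i) ^ 2 - 2 * ∑ i, (y i - g i) * (f i - g i)
        + ∑ i, (f i - g i) ^ 2 := by
    intro f
    rw [Finset.mul_sum, ← Finset.sum_sub_distrib, ← Finset.sum_add_distrib]
    apply Finset.sum_congr rfl
    intro i _; ring
  have gmin : ∀ f : Fin n → ℝ, Monotone f → (∀ i, A ≤ f i ∧ f i ≤ B) →
      ∑ i, (y i - g i) ^ 2 ≤ ∑ i, (y i - f i) ^ 2 := by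
    intro f hf hfb
    have h1 := cross f hf hfb
    have h2 : (0:ℝ) ≤ ∑ i, (f i - g i) ^ 2 :=
      Finset.sum_nonneg fun i _ => sq_nonneg _
    rw [expand f]
    linarith
  refine ⟨⟨hgmono, hgbd⟩, gmin, ?_⟩
  intro f hf hfb hfmin
  have h1 := hfmin g hgmono hgbd
  have h2 := cross f hf hfb
  have h3 : ∑ i, (f i - g i) ^ 2 ≤ 0 := by
    have := expand f
    linarith
  have h4 : ∀ i ∈ Finset.univ, (f i - g i) ^ 2 = 0 := by
    intro i _
    have hle := (Finset.sum_eq_zero_iff_of_nonneg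
      (fun i _ => sq_nonneg (f i - g i))).mp
      (le_antisymm h3 (Finset.sum_nonneg fun i _ => sq_nonneg _))
    exact hle i (Finset.mem_univ i)
  funext i
  have := h4 i (Finset.mem_univ i)
  nlinarith [this]
end

section
/- Residual sum of squares decomposition under Winsorization: let y ∈ ℝⁿ and let f* be the isotonic regression of y with the regressogram property (on each constant block of f*, the value of f* equals the mean of y over that block). Then for any A ≤ B, letting g = max(A, min(B, f*)) coordinatewise, ∑ᵢ(yᵢ - gᵢ)² = ∑ᵢ(yᵢ - f*ᵢ)² + ∑ᵢ (A - f*ᵢ)₊² + ∑ᵢ (f*ᵢ - B)₊², where x₊ = max(x, 0). -/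
lemma cross_zero (n : ℕ) (y fs : Fin n → ℝ)
    (hreg : ∀ i : Fin n,
      ∑ j ∈ Finset.univ.filter (fun j => fs j = fs i), (y j - fs j) = 0)
    (c : ℝ → ℝ) : ∑ i, (y i - fs i) * c (fs i) = 0 := by
  rw [← Finset.sum_fiberwise_of_maps_to (g := fs) (t := Finset.univ.image fs)
    (fun x _ => Finset.mem_image_of_mem fs (Finset.mem_univ x))]
  refine Finset.sum_eq_zero fun v hv => ?_
  obtain ⟨i, _, hi⟩ := Finset.mem_image.mp hv
  subst hi
  have : ∑ j ∈ Finset.univ.filter (fun j => fs j = fs i), (y j - fs j) * c (fs j)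
      = ∑ j ∈ Finset.univ.filter (fun j => fs j = fs i), (y j - fs j) * c (fs i) :=
    Finset.sum_congr rfl fun j hj => by rw [(Finset.mem_filter.mp hj).2]
  rw [this, ← Finset.sum_mul, hreg i, zero_mul]

/-- Residual sum of squares decomposition under Winsorization.
If `fs` is the isotonic regression of `y` with the regressogram property
(residuals of `y` sum to zero on each level set of `fs`), then for `A ≤ B`,
with `g = max A (min B fs)` coordinatewise,
`∑ (yᵢ - gᵢ)² = ∑ (yᵢ - fsᵢ)² + ∑ (A - fsᵢ)₊² + ∑ (fsᵢ - B)₊²`. -/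
theorem rss_decomposition_winsorization (n : ℕ) (hn : 1 ≤ n)
    (y fs : Fin n → ℝ) (hmono : Monotone fs)
    (hmin : ∀ f : Fin n → ℝ, Monotone f →
      ∑ i, (y i - fs i) ^ 2 ≤ ∑ i, (y i - f i) ^ 2)
    (hreg : ∀ i : Fin n,
      ∑ j ∈ Finset.univ.filter (fun j => fs j = fs i), (y j - fs j) = 0)
    (A B : ℝ) (hAB : A ≤ B) :
    ∑ i, (y i - max A (min B (fs i))) ^ 2
      = ∑ i, (y i - fs i) ^ 2
        + ∑ i, (max (A - fs i) 0) ^ 2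
        + ∑ i, (max (fs i - B) 0) ^ 2 := by
  set c : ℝ → ℝ := fun v => v - max A (min B v) with hc
  have hpt : ∀ v : ℝ, c v ^ 2 = (max (A - v) 0) ^ 2 + (max (v - B) 0) ^ 2 := by
    intro v
    simp only [hc]
    rcases le_total v A with h | h
    · rw [min_eq_right (h.trans hAB), max_eq_left h,
        max_eq_left (by linarith), max_eq_right (by linarith)]
      ring
    · rcases le_total v B with h2 | h2
      · rw [min_eq_right h2, max_eq_right h,
          max_eq_right (by linarith), max_eq_right (by linarith)]
        ring
      · rw [min_eq_left h2, max_eq_right hAB,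
          max_eq_right (by linarith), max_eq_left (by linarith)]
        ring
  have key : ∀ i, (y i - max A (min B (fs i))) ^ 2
      = (y i - fs i) ^ 2 + ((max (A - fs i) 0) ^ 2 + (max (fs i - B) 0) ^ 2)
        + 2 * ((y i - fs i) * c (fs i)) := by
    intro i
    have : (y i - max A (min B (fs i))) ^ 2
        = (y i - fs i) ^ 2 + c (fs i) ^ 2 + 2 * ((y i - fs i) * c (fs i)) := by
      simp only [hc]; ring
    rw [this, hpt (fs i)]
  calc ∑ i, (y i - max A (min B (fs i))) ^ 2
      = ∑ i, ((y i - fs i) ^ 2 + ((max (A - fs i) 0) ^ 2 + (max (fs i - B) 0) ^ 2)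
          + 2 * ((y i - fs i) * c (fs i))) := Finset.sum_congr rfl fun i _ => key i
    _ = ∑ i, (y i - fs i) ^ 2 + (∑ i, (max (A - fs i) 0) ^ 2 + ∑ i, (max (fs i - B) 0) ^ 2)
          + 2 * ∑ i, (y i - fs i) * c (fs i) := by
        simp [Finset.sum_add_distrib, Finset.mul_sum]
    _ = _ := by rw [cross_zero n y fs hreg c]; ring
end

section
/- Zero-fit threshold bound (Corollary): let y ∈ ℝⁿ with mean ȳ, and let f* be the isotonic regression of y (with respect to a covariate ordering given by a permutation π putting the covariate in ascending order). Then (1/2)∑ᵢ |f*ᵢ - ȳ| ≤ max_{1≤m≤n} |∑_{i=1}^m (y_{π(i)} - ȳ)|. Hence if λ ≥ max_m |∑_{i=1}^m (y_{π(i)} - ȳ)|, then 2λ ≥ ∑ᵢ|f*ᵢ - ȳ| and the univariate LISO solution is the constant ȳ. -/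
/-- Zero-fit threshold bound. Let `π` order the covariate
increasingly, `z = y ∘ π`, `ȳ` the mean of `y`, and `fs` the isotonic
regression of `z` (with the regressogram property). Then
`(1/2) ∑ |fsᵢ - ȳ| ≤ max_{1 ≤ m ≤ n} |∑_{i ≤ m} (zᵢ - ȳ)|`; hence if
`λ` is at least this maximal partial sum, then `2λ ≥ ∑ |fsᵢ - ȳ|`. -/
theorem zero_fit_threshold_bound (n : ℕ) (hn : 1 ≤ n)
    (y : Fin n → ℝ) (π : Equiv.Perm (Fin n)) (fs : Fin n → ℝ)
    (hmono : Monotone fs)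
    (hmin : ∀ f : Fin n → ℝ, Monotone f →
      ∑ i, (y (π i) - fs i) ^ 2 ≤ ∑ i, (y (π i) - f i) ^ 2)
    (hreg : ∀ i : Fin n,
      ∑ j ∈ Finset.univ.filter (fun j => fs j = fs i), (y (π j) - fs j) = 0) :
    let ybar : ℝ := (1 / (n : ℝ)) * ∑ i, y i
    let M : ℝ := Finset.univ.sup'
      (Finset.univ_nonempty_iff.mpr (Fin.pos_iff_nonempty.mp (by omega)))
      (fun m : Fin n => |∑ i ∈ Finset.Iic m, (y (π i) - ybar)|)
    (1 / 2) * ∑ i, |fs i - ybar| ≤ M ∧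
    ∀ lam : ℝ, M ≤ lam → ∑ i, |fs i - ybar| ≤ 2 * lam := by
  intro ybar M
  have hnR : (n : ℝ) ≠ 0 := by positivity
  have hne : (Finset.univ : Finset (Fin n)).Nonempty :=
    Finset.univ_nonempty_iff.mpr (Fin.pos_iff_nonempty.mp (by omega))
  set z : Fin n → ℝ := fun i => y (π i) with hz
  have hsumz : ∑ i, z i = ∑ i, y i := Equiv.sum_comp π y
  -- total residual is zero
  have hfiber : ∀ v ∈ Finset.image fs Finset.univ,
      ∑ j ∈ Finset.univ.filter (fun j => fs j = v), (z j - fs j) = 0 := by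
    intro v hv
    obtain ⟨i, -, rfl⟩ := Finset.mem_image.mp hv
    exact hreg i
  have htotal : ∑ i, (z i - fs i) = 0 := by
    rw [← Finset.sum_fiberwise_of_maps_to
      (fun x _ => Finset.mem_image_of_mem fs (Finset.mem_univ x))
      (fun j => z j - fs j)]
    exact Finset.sum_eq_zero hfiber
  have hsumfs : ∑ i, fs i = ∑ i, y i := by
    rw [Finset.sum_sub_distrib] at htotal
    linarith [hsumz]
  have hsumy : (n : ℝ) * ybar = ∑ i, y i := by
    show (n : ℝ) * ((1 / (n : ℝ)) * ∑ i, y i) = ∑ i, y i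
    field_simp
  have hmean : ∑ i, (fs i - ybar) = 0 := by
    rw [Finset.sum_sub_distrib, Finset.sum_const, Finset.card_univ, Fintype.card_fin,
      nsmul_eq_mul, hsumfs, hsumy]
    ring
  have hzmean : ∑ i, (z i - ybar) = 0 := by
    rw [Finset.sum_sub_distrib, Finset.sum_const, Finset.card_univ, Fintype.card_fin,
      nsmul_eq_mul, hsumz, hsumy]
    ring
  -- the set where fs exceeds ybar
  set A := Finset.univ.filter (fun i => ybar < fs i) with hA
  -- residuals sum to zero on A (union of fibers)
  have hAsum : ∑ i ∈ A, (z i - fs i) = 0 := by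
    rw [hA, Finset.sum_filter]
    rw [← Finset.sum_fiberwise_of_maps_to
      (fun x _ => Finset.mem_image_of_mem fs (Finset.mem_univ x))
      (fun j => if ybar < fs j then z j - fs j else 0)]
    refine Finset.sum_eq_zero fun v hv => ?_
    have h1 : ∑ j ∈ Finset.univ.filter (fun j => fs j = v),
        (if ybar < fs j then z j - fs j else 0)
        = ∑ j ∈ Finset.univ.filter (fun j => fs j = v),
          (if ybar < v then z j - fs j else 0) := by
      refine Finset.sum_congr rfl fun j hj => ?_
      rw [(Finset.mem_filter.mp hj).2]
    rw [h1]
    by_cases hc : ybar < v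
    · simp only [if_pos hc]
      exact hfiber v hv
    · simp [hc]
  -- key identity: sum of absolute values
  have habs : ∑ i, |fs i - ybar| = 2 * ∑ i ∈ A, (fs i - ybar) := by
    have h1 : ∀ i : Fin n, |fs i - ybar| =
        2 * (if ybar < fs i then fs i - ybar else 0) - (fs i - ybar) := by
      intro i
      by_cases h : ybar < fs i
      · rw [if_pos h, abs_of_pos (by linarith)]; ring
      · rw [if_neg h, abs_of_nonpos (by push_neg at h; linarith)]; ring
    calc ∑ i, |fs i - ybar|
        = ∑ i, (2 * (if ybar < fs i then fs i - ybar else 0) - (fs i - ybar)) :=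
          Finset.sum_congr rfl fun i _ => h1 i
      _ = 2 * ∑ i, (if ybar < fs i then fs i - ybar else 0) := by
          rw [Finset.sum_sub_distrib, hmean, ← Finset.mul_sum]; ring
      _ = 2 * ∑ i ∈ A, (fs i - ybar) := by
          rw [hA, Finset.sum_filter]
  have hM0 : 0 ≤ M := by
    obtain ⟨m, hm⟩ := hne
    exact le_trans (abs_nonneg _)
      (Finset.le_sup' (fun m : Fin n => |∑ i ∈ Finset.Iic m, (z i - ybar)|) hm)
  -- the key bound
  have key : ∑ i ∈ A, (fs i - ybar) ≤ M := by
    have hswap : ∑ i ∈ A, (fs i - ybar) = ∑ i ∈ A, (z i - ybar) := by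
      have : ∑ i ∈ A, ((z i - ybar) - (fs i - ybar)) = 0 := by
        calc ∑ i ∈ A, ((z i - ybar) - (fs i - ybar))
            = ∑ i ∈ A, (z i - fs i) := Finset.sum_congr rfl (by intros; ring)
          _ = 0 := hAsum
      rw [Finset.sum_sub_distrib] at this
      linarith
    rw [hswap]
    rcases A.eq_empty_or_nonempty with hAe | hAne
    · rw [hAe, Finset.sum_empty]; exact hM0
    · set m0 := A.min' hAne with hm0
      have hm0A : m0 ∈ A := A.min'_mem hAne
      have hAIci : A = Finset.Ici m0 := by
        ext i
        simp only [Finset.mem_Ici]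
        constructor
        · intro hi; exact A.min'_le i hi
        · intro hi
          rw [hA, Finset.mem_filter]
          refine ⟨Finset.mem_univ _, ?_⟩
          have h2 : ybar < fs m0 := (Finset.mem_filter.mp hm0A).2
          exact lt_of_lt_of_le h2 (hmono hi)
      rw [hAIci]
      by_cases hm0z : m0.val = 0
      · have : Finset.Ici m0 = Finset.univ := by
          ext i
          simp only [Finset.mem_Ici, Finset.mem_univ, iff_true, Fin.le_def, hm0z]
          omega
        rw [this, hzmean]
        exact hM0
      · have hlt : m0.val - 1 < n := by omega
        set m : Fin n := ⟨m0.val - 1, hlt⟩ with hm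
        have hcompl : Finset.Ici m0 = (Finset.Iic m)ᶜ := by
          ext i
          have hmv : (m : ℕ) + 1 = (m0 : ℕ) := Nat.succ_pred_eq_of_ne_zero hm0z
          simp only [Finset.mem_Ici, Finset.mem_compl, Finset.mem_Iic, Fin.le_def]
          omega
        have hsplit : ∑ i ∈ Finset.Iic m, (z i - ybar) +
            ∑ i ∈ (Finset.Iic m)ᶜ, (z i - ybar) = 0 := by
          rw [Finset.sum_add_sum_compl, hzmean]
        have hble : |∑ i ∈ Finset.Iic m, (z i - ybar)| ≤ M :=
          Finset.le_sup' (fun m : Fin n => |∑ i ∈ Finset.Iic m, (z i - ybar)|)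
            (Finset.mem_univ m)
        rw [hcompl]
        have := abs_le.mp hble
        linarith [this.1]
  constructor
  · rw [habs]; linarith
  · intro lam hlam
    rw [habs]; linarith
end
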